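/- Let X ~ Γ_λ(α,β) with λ ∈ (0,1), α > 0, β > 0 and α + 2 < 1/λ. Then E[X²] = α(α+1) / (β² (1-λ(α+1))(1-λ(α+2))). -/

import Mathlib

open MeasureTheory




/-- The degenerate gamma function `Γ_λ(s) = ∫_0^∞ (1+λt)^{-1/λ} t^{s-1} dt`. -/
noncomputable def degGamma (lam s : ℝ) : ℝ :=
  ∫ t in Set.Ioi (0:ℝ), (1 + lam * t) ^ (-1/lam) * t ^ (s - 1)

/-- The probability density function of the degenerate gamma distribution `Γ_λ(α,β)`. -/
noncomputable def degGammaPdf (lam α β x : ℝ) : ℝ :=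
  if 0 < x then (1 / degGamma lam α) * β * (1 + lam * β * x) ^ (-1/lam) * (β * x) ^ (α - 1)
  else 0


open Set Filter


lemma degInteg {lam s : ℝ} (hl : 0 < lam) (hs : 0 < s) (hsl : s < 1/lam) :
    IntegrableOn (fun t : ℝ => (1 + lam * t) ^ (-1/lam) * t ^ (s - 1)) (Set.Ioi 0) := by
  have hmeas : ∀ u : Set ℝ, u ⊆ Set.Ioi 0 → MeasurableSet u → AEStronglyMeasurable
      (fun t : ℝ => (1 + lam * t) ^ (-1/lam) * t ^ (s - 1)) (volume.restrict u) := by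
    intro u hu hum
    apply ContinuousOn.aestronglyMeasurable _ hum
    apply ContinuousOn.mul
    · apply ContinuousOn.rpow_const (by fun_prop)
      intro t ht
      have h2 : (0:ℝ) < t := hu ht
      have h3 : (0:ℝ) < 1 + lam * t := by positivity
      exact Or.inl h3.ne'
    · exact ContinuousOn.rpow_const continuousOn_id (fun t ht => Or.inl (ne_of_gt (hu ht)))
  have key : ∀ t ∈ Set.Ioi (0:ℝ), 0 ≤ (1 + lam * t) ^ (-1/lam) * t ^ (s - 1) := by
    intro t ht
    have ht0 : (0:ℝ) < t := ht
    have h1 : (0:ℝ) < 1 + lam * t := by positivity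
    exact mul_nonneg (Real.rpow_nonneg h1.le _) (Real.rpow_nonneg ht0.le _)
  rw [← Set.Ioc_union_Ioi_eq_Ioi (zero_le_one (α := ℝ))]
  apply IntegrableOn.union
  · -- on Ioc 0 1, dominate by t ^ (s-1)
    apply Integrable.mono' ((intervalIntegrable_iff_integrableOn_Ioc_of_le zero_le_one).mp
      (intervalIntegral.intervalIntegrable_rpow' (r := s - 1) (by linarith)))
      (hmeas _ (Set.Ioc_subset_Ioi_self) measurableSet_Ioc)
    filter_upwards [ae_restrict_mem measurableSet_Ioc] with t ht
    have ht0 : (0:ℝ) < t := ht.1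
    rw [Real.norm_of_nonneg (key t ht0)]
    calc (1 + lam * t) ^ (-1/lam) * t ^ (s - 1) ≤ 1 * t ^ (s-1) := by
          apply mul_le_mul_of_nonneg_right _ (Real.rpow_nonneg ht0.le _)
          exact Real.rpow_le_one_of_one_le_of_nonpos (by nlinarith) (by
            rw [neg_div]; exact neg_nonpos.mpr (by positivity))
      _ = t ^ (s-1) := one_mul _
  · -- on Ioi 1, dominate by lam^(-1/lam) * t^(s-1-1/lam)
    apply Integrable.mono'
      ((integrableOn_Ioi_rpow_of_lt (show s - 1 - 1/lam < -1 by linarith) one_pos).const_mul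
        (lam ^ (-1/lam)))
      (hmeas _ (fun t ht => Set.mem_Ioi.mpr (lt_trans one_pos (Set.mem_Ioi.mp ht))) measurableSet_Ioi)
    filter_upwards [ae_restrict_mem measurableSet_Ioi] with t ht
    have ht0 : (0:ℝ) < t := lt_trans one_pos ht
    rw [Real.norm_of_nonneg (key t ht0)]
    have h1 : (1 + lam * t) ^ (-1/lam) ≤ (lam * t) ^ (-1/lam) := by
      apply Real.rpow_le_rpow_of_nonpos (by positivity) (by linarith)
      rw [neg_div]; exact neg_nonpos.mpr (by positivity)
    have h2 : (lam * t) ^ (-1/lam) = lam ^ (-1/lam) * t ^ (-1/lam) :=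
      Real.mul_rpow hl.le ht0.le
    calc (1 + lam * t) ^ (-1/lam) * t ^ (s - 1)
        ≤ (lam * t) ^ (-1/lam) * t ^ (s - 1) :=
          mul_le_mul_of_nonneg_right h1 (Real.rpow_nonneg ht0.le _)
      _ = lam ^ (-1/lam) * (t ^ (-1/lam) * t ^ (s-1)) := by rw [h2]; ring
      _ = lam ^ (-1/lam) * t ^ (s - 1 - 1/lam) := by
          rw [← Real.rpow_add ht0]; ring_nf

lemma degGamma_pos {lam s : ℝ} (hl : 0 < lam) (hs : 0 < s) (hsl : s < 1/lam) :
    0 < degGamma lam s := by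
  rw [degGamma,
    setIntegral_pos_iff_support_of_nonneg_ae ?_ (degInteg hl hs hsl)]
  · apply lt_of_lt_of_le _ (measure_mono (show Set.Ioi (0:ℝ) ⊆
        Function.support (fun t : ℝ => (1 + lam * t) ^ (-1/lam) * t ^ (s - 1)) ∩ Set.Ioi 0
        from ?_))
    · simp [Real.volume_Ioi]
    · intro t ht
      have ht0 : (0:ℝ) < t := ht
      have h1 : (0:ℝ) < 1 + lam * t := by positivity
      refine ⟨?_, ht⟩
      simp only [Function.mem_support]
      positivity
  · filter_upwards [ae_restrict_mem measurableSet_Ioi] with t ht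
    have ht0 : (0:ℝ) < t := ht
    have h1 : (0:ℝ) < 1 + lam * t := by positivity
    exact mul_nonneg (Real.rpow_nonneg h1.le _) (Real.rpow_nonneg ht0.le _)

lemma degGamma_rec {lam s : ℝ} (hl : 0 < lam) (hs : 0 < s) (hsl : s + 1 < 1/lam) :
    (1 - lam * (s+1)) * degGamma lam (s+1) = s * degGamma lam s := by
  have hs1 : s < 1/lam := by linarith
  have hI1 := degInteg hl hs hs1
  have hI2 := degInteg hl (by linarith : (0:ℝ) < s + 1) hsl
  set f' : ℝ → ℝ := fun t => s * ((1 + lam * t) ^ (-1/lam) * t ^ (s - 1)) +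
    (lam * (s+1) - 1) * ((1 + lam * t) ^ (-1/lam) * t ^ (s + 1 - 1)) with hf'
  set F : ℝ → ℝ := fun t => t ^ s * (1 + lam * t) ^ (1 - 1/lam) with hF
  have hderiv : ∀ t ∈ Set.Ioi (0:ℝ), HasDerivAt F (f' t) t := by
    intro t ht
    have ht0 : (0:ℝ) < t := ht
    have h1 : (0:ℝ) < 1 + lam * t := by positivity
    have d1 : HasDerivAt (fun t : ℝ => t ^ s) (s * t ^ (s - 1)) t :=
      Real.hasDerivAt_rpow_const (Or.inl ht0.ne')
    have d2 : HasDerivAt (fun t : ℝ => (1 + lam * t) ^ (1 - 1/lam))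
        (lam * (1 - 1/lam) * (1 + lam * t) ^ (1 - 1/lam - 1)) t := by
      have dbase : HasDerivAt (fun t : ℝ => 1 + lam * t) lam t := by
        simpa using ((hasDerivAt_id t).const_mul lam).const_add 1
      simpa [mul_comm, mul_assoc] using dbase.rpow_const (p := 1 - 1/lam) (Or.inl h1.ne')
    have := d1.mul d2
    refine this.congr_deriv (Eq.symm ?_)
    have e1 : (1 + lam * t) ^ (1 - 1/lam) = (1 + lam * t) * (1 + lam * t) ^ (-1/lam) := by
      rw [show (1 : ℝ) - 1/lam = 1 + (-1/lam) by ring, Real.rpow_add h1, Real.rpow_one]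
    have e2 : (1 : ℝ) - 1/lam - 1 = -1/lam := by ring
    have e3 : t ^ (s + 1 - 1) = t ^ s := by norm_num
    have e4 : t ^ s = t ^ (s - 1) * t := by
      rw [show s = s - 1 + 1 by ring, Real.rpow_add ht0, Real.rpow_one]; ring_nf
    simp only [hf', e2, e3, e1]
    rw [e4]
    have hlne : lam ≠ 0 := hl.ne'
    field_simp
    ring
  have hcont : ContinuousWithinAt F (Set.Ici (0:ℝ)) 0 := by
    apply ContinuousAt.continuousWithinAt
    apply ContinuousAt.mul
    · exact Real.continuousAt_rpow_const 0 s (Or.inr hs.le)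
    · apply ContinuousAt.rpow_const (by fun_prop)
      left; norm_num
  have hF0 : F 0 = 0 := by
    simp [hF, Real.zero_rpow hs.ne']
  have htend : Tendsto F atTop (nhds 0) := by
    have hb : Tendsto (fun t : ℝ => lam ^ (1 - 1/lam) * t ^ (s + 1 - 1/lam)) atTop (nhds 0) := by
      have : Tendsto (fun t : ℝ => t ^ (-(1/lam - s - 1))) atTop (nhds 0) :=
        tendsto_rpow_neg_atTop (by linarith)
      have h0 : lam ^ (1 - 1/lam) * 0 = 0 := by ring
      rw [← h0]
      exact (this.const_mul _).congr
        (fun t => by rw [show -(1/lam - s - 1) = s + 1 - 1/lam by ring])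
    apply squeeze_zero' (g := fun t : ℝ => lam ^ (1 - 1/lam) * t ^ (s + 1 - 1/lam)) _ _ hb
    · filter_upwards [eventually_gt_atTop (0:ℝ)] with t ht0
      have h1 : (0:ℝ) < 1 + lam * t := by positivity
      exact mul_nonneg (Real.rpow_nonneg ht0.le _) (Real.rpow_nonneg h1.le _)
    · filter_upwards [eventually_gt_atTop (0:ℝ)] with t ht0
      have h1 : (0:ℝ) < 1 + lam * t := by positivity
      have hle : (1 + lam * t) ^ (1 - 1/lam) ≤ (lam * t) ^ (1 - 1/lam) := by
        apply Real.rpow_le_rpow_of_nonpos (by positivity) (by linarith)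
        have : 1 < 1/lam := by linarith
        linarith
      calc F t ≤ t ^ s * (lam * t) ^ (1 - 1/lam) :=
            mul_le_mul_of_nonneg_left hle (Real.rpow_nonneg ht0.le _)
        _ = lam ^ (1 - 1/lam) * t ^ (s + 1 - 1/lam) := by
            rw [Real.mul_rpow hl.le ht0.le,
              show s + 1 - 1/lam = s + (1 - 1/lam) by ring, Real.rpow_add ht0]
            ring
  have hfint : IntegrableOn f' (Set.Ioi 0) := by
    apply Integrable.add
    · exact (hI1.const_mul s)
    · have : (fun t : ℝ => (1 + lam * t) ^ (-1/lam) * t ^ (s + 1 - 1)) =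
          (fun t : ℝ => (1 + lam * t) ^ (-1/lam) * t ^ ((s + 1) - 1)) := rfl
      exact (hI2.const_mul (lam * (s+1) - 1))
  have hFTC := integral_Ioi_of_hasDerivAt_of_tendsto hcont hderiv hfint htend
  rw [hF0, sub_zero] at hFTC
  have hsplit : ∫ t in Set.Ioi (0:ℝ), f' t =
      s * degGamma lam s + (lam * (s+1) - 1) * degGamma lam (s+1) := by
    rw [hf']
    rw [integral_add (hI1.const_mul s) (hI2.const_mul _), integral_const_mul,
      integral_const_mul, degGamma, degGamma]
  rw [hsplit] at hFTC
  linarith [hFTC]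

theorem degGamma_second_moment (lam α β : ℝ) (hlam : lam ∈ Set.Ioo (0:ℝ) 1)
    (hα : 0 < α) (hβ : 0 < β) (h : α + 2 < 1 / lam) :
    ∫ x : ℝ, x ^ 2 * degGammaPdf lam α β x =
      α * (α + 1) / (β ^ 2 * (1 - lam * (α + 1)) * (1 - lam * (α + 2))) := by
  obtain ⟨hl0, hl1⟩ := hlam
  have hΓ := degGamma_pos hl0 hα (by linarith)
  have hd2 : 0 < 1 - lam * (α + 2) := by
    have := (lt_div_iff₀ hl0).mp h
    nlinarith
  have hd1 : 0 < 1 - lam * (α + 1) := by nlinarith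
  have hsupp : ∀ x ∉ Set.Ioi (0:ℝ), x ^ 2 * degGammaPdf lam α β x = 0 := by
    intro x hx
    simp only [Set.mem_Ioi, not_lt] at hx
    simp [degGammaPdf, not_lt.mpr hx]
  rw [← setIntegral_eq_integral_of_forall_compl_eq_zero hsupp]
  have hcongr : ∀ x ∈ Set.Ioi (0:ℝ), x ^ 2 * degGammaPdf lam α β x =
      (1 / degGamma lam α * β⁻¹) *
        ((1 + lam * (β * x)) ^ (-1/lam) * (β * x) ^ (α + 2 - 1)) := by
    intro x hx
    have hx0 : (0:ℝ) < x := hx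
    have hbx : (0:ℝ) < β * x := by positivity
    rw [degGammaPdf, if_pos hx0]
    have e1 : (β * x) ^ (α + 2 - 1) = (β * x) ^ (α - 1) * (β * x) ^ (2:ℝ) := by
      rw [← Real.rpow_add hbx]; ring_nf
    have e2 : (β * x) ^ (2:ℝ) = (β * x) ^ (2:ℕ) := by
      rw [← Real.rpow_natCast]; norm_num
    rw [e1, e2, mul_assoc lam β x]
    field_simp
  rw [setIntegral_congr_fun measurableSet_Ioi hcongr, integral_const_mul]
  have hsub : (∫ x in Set.Ioi (0:ℝ), (1 + lam * (β * x)) ^ (-1/lam) * (β * x) ^ (α + 2 - 1))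
      = β⁻¹ * degGamma lam (α + 2) := by
    have := integral_comp_mul_left_Ioi
      (fun u : ℝ => (1 + lam * u) ^ (-1/lam) * u ^ (α + 2 - 1)) 0 hβ
    simp only [mul_zero] at this
    rw [this, smul_eq_mul, degGamma]
  rw [hsub]
  have hrec1 := degGamma_rec hl0 hα (by linarith)
  have hrec2 := degGamma_rec hl0 (by linarith : (0:ℝ) < α + 1) (by linarith)
  have he : (α:ℝ) + 1 + 1 = α + 2 := by ring
  rw [he] at hrec2
  have key : (1 - lam*(α+1)) * ((1 - lam*(α+2)) * degGamma lam (α+2)) =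
      α * (α+1) * degGamma lam α := by
    linear_combination (1 - lam*(α+1)) * hrec2 + (α+1) * hrec1
  field_simp
  rw [eq_div_iff (mul_pos (by linarith) (by linarith)).ne']
  nlinarith [key, sq_nonneg β]
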